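/- Let A be a commutative ring with total ring of fractions F, and let P be an n×m matrix over F. Fix a set I of m distinct integers between 1 and m+n, and let Δ_I be the m×(m+n) matrix with 1 in position (k, i_k) (where i_1 < ⋯ < i_m are the elements of I) and 0 elsewhere. For any factorization P = N D⁻¹ with N ∈ A^{n×m}, D ∈ A^{m×m}, det D a nonzerodivisor, define Λ(N,D) = { λ ∈ A : there exists K ∈ A^{(m+n)×m} with λ T = K Δ_I T, where T = [Nᵗ, Dᵗ]ᵗ }. Then Λ(N,D) is independent of the choice of the factorization: if P = N D⁻¹ = N' D'⁻¹ with both D, D' nonsingular over A, then Λ(N,D) = Λ(N',D'). -/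

import Mathlib

open Matrix

/-- The selection matrix `Δ_I`: for `I` a set of `m` indices in `Fin N` with elements
`i_1 < ⋯ < i_m`, the `(k, i_k)` entry is `1` and all other entries are `0`. -/
noncomputable def deltaMat {A : Type*} [CommRing A] (m N : ℕ) (I : Finset (Fin N))
    (h : I.card = m) : Matrix (Fin m) (Fin N) A :=
  Matrix.of fun k j => if j = (I.orderIsoOfFin h k : Fin N) then 1 else 0

/-- The stacked matrix `T = [Nᵗ, Dᵗ]ᵗ`. -/
def stackND {A : Type*} [CommRing A] {n m : ℕ} (N : Matrix (Fin n) (Fin m) A)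
    (D : Matrix (Fin m) (Fin m) A) : Matrix (Fin (n + m)) (Fin m) A :=
  Matrix.of (Fin.addCases (motive := fun _ => Fin m → A) (fun i => N i) (fun j => D j))

/-- The generalized elementary factor of the factorization `P = N D⁻¹` with respect to `I`. -/
noncomputable def gef {A : Type*} [CommRing A] {n m : ℕ} (N : Matrix (Fin n) (Fin m) A)
    (D : Matrix (Fin m) (Fin m) A) (I : Finset (Fin (n + m))) (h : I.card = m) : Set A :=
  {lam | ∃ K : Matrix (Fin (n + m)) (Fin m) A,
    lam • stackND N D = K * (deltaMat (A := A) m (n + m) I h * stackND N D)}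

section Aux

variable {A F : Type*} [CommRing A] [CommRing F] {n m : ℕ}

lemma stackND_apply_left (N : Matrix (Fin n) (Fin m) A) (D : Matrix (Fin m) (Fin m) A)
    (i : Fin n) (j : Fin m) : stackND N D (Fin.castAdd m i) j = N i j := by
  simp [stackND]

lemma stackND_apply_right (N : Matrix (Fin n) (Fin m) A) (D : Matrix (Fin m) (Fin m) A)
    (i : Fin m) (j : Fin m) : stackND N D (Fin.natAdd n i) j = D i j := by
  simp [stackND]

lemma stackND_mul (N : Matrix (Fin n) (Fin m) A) (D X : Matrix (Fin m) (Fin m) A) :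
    stackND N D * X = stackND (N * X) (D * X) := by
  ext i j
  refine Fin.addCases (fun i => ?_) (fun i => ?_) i <;>
    simp [Matrix.mul_apply, stackND_apply_left, stackND_apply_right]

lemma stackND_map (f : A →+* F) (N : Matrix (Fin n) (Fin m) A) (D : Matrix (Fin m) (Fin m) A) :
    (stackND N D).map f = stackND (N.map f) (D.map f) := by
  ext i j
  refine Fin.addCases (fun i => ?_) (fun i => ?_) i <;>
    simp [Matrix.map_apply, stackND_apply_left, stackND_apply_right]

lemma deltaMat_map (f : A →+* F) (Nn : ℕ) (I : Finset (Fin Nn)) (h : I.card = m) :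
    (deltaMat m Nn I h : Matrix (Fin m) (Fin Nn) A).map f = deltaMat m Nn I h := by
  ext k j
  simp only [deltaMat, Matrix.map_apply, Matrix.of_apply, apply_ite f, map_one, map_zero]

lemma smul_map (f : A →+* F) (lam : A) (M : Matrix (Fin (n + m)) (Fin m) A) :
    (lam • M).map f = f lam • M.map f := by
  ext i j
  simp [Matrix.map_apply, smul_eq_mul]

end Aux

lemma gef_subset {A : Type*} [CommRing A] {n m : ℕ}
    (P : Matrix (Fin n) (Fin m) (FractionRing A))
    (N N' : Matrix (Fin n) (Fin m) A) (D D' : Matrix (Fin m) (Fin m) A)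
    (hD : D.det ∈ nonZeroDivisors A)
    (hP : P * D.map (algebraMap A (FractionRing A)) = N.map (algebraMap A (FractionRing A)))
    (hP' : P * D'.map (algebraMap A (FractionRing A)) = N'.map (algebraMap A (FractionRing A)))
    (I : Finset (Fin (n + m))) (hI : I.card = m) :
    gef N D I hI ⊆ gef N' D' I hI := by
  rintro lam ⟨K, hK⟩
  refine ⟨K, ?_⟩
  set f := algebraMap A (FractionRing A) with hf
  have hinj : Function.Injective f := IsFractionRing.injective A (FractionRing A)
  have hu : IsUnit ((D.map f).det) := by
    have h := IsLocalization.map_units (FractionRing A) ⟨D.det, hD⟩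
    simpa [RingHom.map_det, RingHom.mapMatrix_apply] using h
  have hDinv : D.map f * (D.map f)⁻¹ = 1 := Matrix.mul_nonsing_inv _ hu
  set X := (D.map f)⁻¹ * D'.map f with hX
  have hT' : (stackND N D).map f * X = (stackND N' D').map f := by
    have h2 : D.map f * X = D'.map f := by
      rw [hX, ← Matrix.mul_assoc, hDinv, Matrix.one_mul]
    have h1 : N.map f * X = N'.map f := by
      rw [← hP, hX, Matrix.mul_assoc, ← Matrix.mul_assoc (D.map ⇑f), hDinv, Matrix.one_mul, hP']
    rw [stackND_map, stackND_map, stackND_mul, h1, h2]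
  have key : (lam • stackND N' D').map f
      = K.map f * ((deltaMat m (n + m) I hI).map f * (stackND N' D').map f) := by
    calc (lam • stackND N' D').map f
        = f lam • (stackND N' D').map f := smul_map f lam _
      _ = f lam • ((stackND N D).map f * X) := by rw [hT']
      _ = (f lam • (stackND N D).map f) * X := by rw [Matrix.smul_mul]
      _ = ((lam • stackND N D).map f) * X := by rw [smul_map]
      _ = ((K * (deltaMat (A := A) m (n + m) I hI * stackND N D)).map f) * X := by rw [hK]
      _ = K.map f * ((deltaMat m (n + m) I hI).map f * ((stackND N D).map f * X)) := by
          rw [Matrix.map_mul, Matrix.map_mul, Matrix.mul_assoc, Matrix.mul_assoc]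
      _ = K.map f * ((deltaMat m (n + m) I hI).map f * (stackND N' D').map f) := by
          rw [hT']
  have key2 : (lam • stackND N' D').map f
      = (K * (deltaMat (A := A) m (n + m) I hI * stackND N' D')).map f := by
    rw [Matrix.map_mul, Matrix.map_mul]; exact key
  ext i j
  exact hinj (congrArg (fun M : Matrix (Fin (n + m)) (Fin m) (FractionRing A) => M i j) key2)

/-- the generalized elementary factor is independent of the choice of
right fraction `P = N D⁻¹`. -/
theorem stmt_1 {A : Type*} [CommRing A] {n m : ℕ}
    (P : Matrix (Fin n) (Fin m) (FractionRing A))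
    (N N' : Matrix (Fin n) (Fin m) A) (D D' : Matrix (Fin m) (Fin m) A)
    (hD : D.det ∈ nonZeroDivisors A) (hD' : D'.det ∈ nonZeroDivisors A)
    (hP : P * D.map (algebraMap A (FractionRing A)) = N.map (algebraMap A (FractionRing A)))
    (hP' : P * D'.map (algebraMap A (FractionRing A)) = N'.map (algebraMap A (FractionRing A)))
    (I : Finset (Fin (n + m))) (hI : I.card = m) :
    gef N D I hI = gef N' D' I hI := by
  exact Set.Subset.antisymm (gef_subset P N N' D D' hD hP hP' I hI)
    (gef_subset P N' N D' D hD' hP' hP I hI)
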